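/- Let X be a weakly involutive quantum B-algebra and (τ, σ) a synchronized pair of good maps (σx = (τ(x⁻))˜ = (τ(x˜))⁻ and τx = (σ(x⁻))˜ = (σ(x˜))⁻). Then: (1) τ∘σ = σ if and only if σ∘τ = τ; (2) τ∘τ = τ if and only if σ∘σ = σ. -/
import Mathlib


class QuantumBAlgebra (X : Type*) extends PartialOrder X where
  arr : X → X → X
  sq : X → X → X
  qb1 : ∀ x y z : X, arr y z ≤ arr (arr x y) (arr x z)
  qb2 : ∀ x y z : X, sq y z ≤ arr (sq x y) (sq x z)
  qb3 : ∀ x y z : X, y ≤ z → arr x y ≤ arr x z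
  qb4 : ∀ x y z : X, x ≤ arr y z ↔ y ≤ sq x z

open QuantumBAlgebra

theorem stmt19 {X : Type*} [QuantumBAlgebra X] (d : X)
    (hwi : ∀ x : X, sq (arr x d) d = x ∧ arr (sq x d) d = x)
    (τ σ : X → X)
    (hsync : ∀ x : X, σ x = sq (τ (arr x d)) d ∧ σ x = arr (τ (sq x d)) d) :
    (τ ∘ σ = σ ↔ σ ∘ τ = τ) ∧ (τ ∘ τ = τ ↔ σ ∘ σ = σ) := by
  -- derive τ x = (σ (x⁻))˜
  have htau : ∀ x : X, τ x = sq (σ (arr x d)) d := by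
    intro x
    have h1 : σ (arr x d) = arr (τ (sq (arr x d) d)) d := (hsync (arr x d)).2
    rw [(hwi x).1] at h1
    rw [h1, (hwi (τ x)).1]
  constructor
  · constructor
    · intro h
      funext x; simp only [Function.comp_apply]
      have hx : σ (τ x) = sq (τ (arr (τ x) d)) d := (hsync (τ x)).1
      rw [htau x] at hx
      rw [(hwi (σ (arr x d))).2] at hx
      have := congrFun h (arr x d)
      simp only [Function.comp] at this
      rw [this] at hx
      rw [htau x, hx]
    · intro h
      funext x; simp only [Function.comp_apply]
      have hx : τ (σ x) = sq (σ (arr (σ x) d)) d := htau (σ x)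
      rw [(hsync x).1] at hx ⊢
      rw [(hwi (τ (arr x d))).2] at hx
      have := congrFun h (arr x d)
      simp only [Function.comp] at this
      rw [this] at hx
      exact hx
  · constructor
    · intro h
      funext x; simp only [Function.comp_apply]
      have hx : σ (σ x) = sq (τ (arr (σ x) d)) d := (hsync (σ x)).1
      rw [(hsync x).1] at hx ⊢
      rw [(hwi (τ (arr x d))).2] at hx
      have := congrFun h (arr x d)
      simp only [Function.comp] at this
      rw [this] at hx
      exact hx
    · intro h
      funext x; simp only [Function.comp_apply]
      have hx : τ (τ x) = sq (σ (arr (τ x) d)) d := htau (τ x)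
      rw [htau x] at hx ⊢
      rw [(hwi (σ (arr x d))).2] at hx
      have := congrFun h (arr x d)
      simp only [Function.comp] at this
      rw [this] at hx
      exact hx
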